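/- Let α > 1, β > 0, γ > 0, and let c > 0 be such that f(x) = c x^{β−1}/(γ + x)^{α+β}, x > 0, is a probability density function on (0,∞) (the beta distribution of the second kind). Then for every t > 0, E(X | X > t) = βγ/(α − 1) + ((t² + γt)/(α − 1)) r(t). -/

import Mathlib

open MeasureTheory Set Filter Real

theorem conditional_mean_of_beta_second_kind
    (α β γ c : ℝ) (hα : 1 < α) (hβ : 0 < β) (hγ : 0 < γ) (hc : 0 < c)
    (f : ℝ → ℝ)
    (hf : ∀ x, 0 < x → f x = c * x ^ (β - 1) / (γ + x) ^ (α + β))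
    (hf_supp : ∀ x, x ≤ 0 → f x = 0)
    (hf_prob : ∫ x in Set.Ioi (0 : ℝ), f x = 1)
    (Fbar : ℝ → ℝ) (hFbar : ∀ t, Fbar t = ∫ x in Set.Ioi t, f x)
    (r : ℝ → ℝ) (hr : ∀ t, r t = f t / Fbar t)
    (t : ℝ) (ht : 0 < t) :
    (∫ x in Set.Ioi t, x * f x) / Fbar t
      = β * γ / (α - 1) + ((t ^ 2 + γ * t) / (α - 1)) * r t := by
  have hα1 : (0:ℝ) < α - 1 := by linarith
  have hint0 : IntegrableOn f (Set.Ioi (0:ℝ)) := by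
    by_contra h
    rw [integral_undef h] at hf_prob
    norm_num at hf_prob
  have hintt : IntegrableOn f (Set.Ioi t) := hint0.mono_set (Set.Ioi_subset_Ioi ht.le)
  have hfpos : ∀ x ∈ Set.Ioi t, 0 < f x := by
    intro x hx
    have hx0 : 0 < x := ht.trans hx
    have hgx : 0 < γ + x := by linarith
    rw [hf x hx0]
    positivity
  have hFpos : 0 < Fbar t := by
    rw [hFbar]
    rw [setIntegral_pos_iff_support_of_nonneg_ae]
    · refine lt_of_lt_of_le ?_ (measure_mono (fun x hx => ⟨(hfpos x hx).ne', hx⟩))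
      simp [Real.volume_Ioi]
    · filter_upwards [ae_restrict_mem measurableSet_Ioi] with x hx using (hfpos x hx).le
    · exact hintt
  -- integrability of x * f x
  have hxf_int : IntegrableOn (fun x => x * f x) (Set.Ioi t) := by
    have hbound : IntegrableOn (fun x => c * x ^ (-α)) (Set.Ioi t) :=
      (integrableOn_Ioi_rpow_of_lt (by linarith) ht).const_mul c
    have hG : IntegrableOn (fun x => c * x ^ β / (γ + x) ^ (α + β)) (Set.Ioi t) := by
      refine Integrable.mono hbound ?_ ?_
      · refine (ContinuousOn.aestronglyMeasurable ?_ measurableSet_Ioi)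
        intro x hx
        have hx0 : 0 < x := ht.trans hx
        have hgx : 0 < γ + x := by linarith
        apply ContinuousAt.continuousWithinAt
        have h1 : ContinuousAt (fun y : ℝ => y ^ β) x :=
          Real.continuousAt_rpow_const x β (Or.inl hx0.ne')
        have h2 : ContinuousAt (fun y : ℝ => (γ + y) ^ (α + β)) x :=
          (Real.continuousAt_rpow_const (γ + x) (α + β) (Or.inl hgx.ne')).comp
            (continuousAt_const.add continuousAt_id)
        exact (continuousAt_const.mul h1).div h2 (by positivity)
      · filter_upwards [ae_restrict_mem measurableSet_Ioi] with x hx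
        have hx0 : 0 < x := ht.trans hx
        have hgx : 0 < γ + x := by linarith
        rw [Real.norm_eq_abs, Real.norm_eq_abs, abs_of_nonneg (by positivity),
          abs_of_nonneg (by positivity)]
        have h1 : x ^ (α + β) ≤ (γ + x) ^ (α + β) :=
          Real.rpow_le_rpow hx0.le (by linarith) (by positivity)
        calc c * x ^ β / (γ + x) ^ (α + β) ≤ c * x ^ β / x ^ (α + β) :=
              div_le_div_of_nonneg_left (by positivity) (by positivity) h1
          _ = c * x ^ (-α) := by
              rw [show (-α) = β - (α + β) by ring, Real.rpow_sub hx0, mul_div_assoc]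
    refine hG.congr_fun ?_ measurableSet_Ioi
    intro x hx
    have hx0 : 0 < x := ht.trans hx
    have hgx : 0 < γ + x := by linarith
    have e1 : x ^ (β - 1) * x = x ^ β := by
      rw [← Real.rpow_add_one hx0.ne', sub_add_cancel]
    have hD : (γ + x) ^ (α + β) ≠ 0 := by positivity
    simp only
    rw [hf x hx0, ← e1]
    field_simp
  -- derivative
  set g : ℝ → ℝ := fun x => c * x ^ β * (γ + x) ^ (1 - (α + β)) with hg
  have hderiv : ∀ x ∈ Set.Ici t, HasDerivAt g (β * γ * f x - (α - 1) * (x * f x)) x := by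
    intro x hx
    have hx0 : 0 < x := lt_of_lt_of_le ht hx
    have hgx : 0 < γ + x := by linarith
    have h1 : HasDerivAt (fun y : ℝ => y ^ β) (β * x ^ (β - 1)) x :=
      Real.hasDerivAt_rpow_const (Or.inl hx0.ne')
    have h2 : HasDerivAt (fun y : ℝ => γ + y) 1 x := by
      simpa using (hasDerivAt_id x).const_add γ
    have h3 : HasDerivAt (fun y : ℝ => (γ + y) ^ (1 - (α + β)))
        ((1 - (α + β)) * (γ + x) ^ (1 - (α + β) - 1) * 1) x := by
      exact (Real.hasDerivAt_rpow_const (x := γ + x) (p := 1 - (α + β))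
        (Or.inl hgx.ne')).comp x h2
    have h4 := (h1.const_mul c).mul h3
    refine h4.congr_deriv ?_
    symm
    rw [hf x hx0]
    have e1 : x ^ (β - 1) * x = x ^ β := by
      rw [← Real.rpow_add_one hx0.ne', sub_add_cancel]
    have e2 : (γ + x) ^ (1 - (α + β)) = (γ + x) / (γ + x) ^ (α + β) := by
      rw [Real.rpow_sub hgx, Real.rpow_one]
    have e3 : (γ + x) ^ (1 - (α + β) - 1) = 1 / (γ + x) ^ (α + β) := by
      rw [show 1 - (α + β) - 1 = -(α + β) by ring, Real.rpow_neg hgx.le, one_div]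
    rw [e2, e3, ← e1]
    have hD : (γ + x) ^ (α + β) ≠ 0 := by positivity
    field_simp
    ring
  -- limit at infinity
  have hlim : Tendsto g atTop (nhds 0) := by
    have h1 : Tendsto (fun x : ℝ => c * x ^ (1 - α)) atTop (nhds 0) := by
      have h := (tendsto_rpow_neg_atTop (y := α - 1) (by linarith)).const_mul c
      simpa [show -(α - 1) = 1 - α by ring] using h
    apply squeeze_zero' ?_ ?_ h1
    · filter_upwards [eventually_gt_atTop 0] with x hx
      have hgx : 0 < γ + x := by linarith
      positivity
    · filter_upwards [eventually_gt_atTop 0] with x hx0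
      have hgx : 0 < γ + x := by linarith
      have h2 : (γ + x) ^ (1 - (α + β)) ≤ x ^ (1 - (α + β)) :=
        Real.rpow_le_rpow_of_nonpos hx0 (by linarith) (by linarith)
      calc c * x ^ β * (γ + x) ^ (1 - (α + β)) ≤ c * x ^ β * x ^ (1 - (α + β)) := by
            exact mul_le_mul_of_nonneg_left h2 (by positivity)
        _ = c * x ^ (1 - α) := by
            rw [mul_assoc, ← Real.rpow_add hx0, show β + (1 - (α + β)) = 1 - α by ring]
  -- FTC
  have hint' : IntegrableOn (fun x => β * γ * f x - (α - 1) * (x * f x)) (Set.Ioi t) :=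
    (hintt.const_mul (β * γ)).sub (hxf_int.const_mul (α - 1))
  have key := integral_Ioi_of_hasDerivAt_of_tendsto' hderiv hint' hlim
  rw [integral_sub (hintt.const_mul (β * γ)) (hxf_int.const_mul (α - 1)),
    integral_const_mul, integral_const_mul, ← hFbar] at key
  have hgt : g t = (t ^ 2 + γ * t) * f t := by
    rw [hg]
    simp only
    rw [hf t ht]
    have e1 : t ^ (β - 1) * t = t ^ β := by
      rw [← Real.rpow_add_one ht.ne', sub_add_cancel]
    have e2 : (γ + t) ^ (1 - (α + β)) = (γ + t) / (γ + t) ^ (α + β) := by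
      rw [Real.rpow_sub (by linarith), Real.rpow_one]
    have hD : (γ + t) ^ (α + β) ≠ 0 := by positivity
    rw [e2, ← e1]
    field_simp
    ring
  rw [hgt] at key
  have hF : Fbar t ≠ 0 := hFpos.ne'
  have hA : α - 1 ≠ 0 := hα1.ne'
  have hM : ∫ x in Set.Ioi t, x * f x
      = β * γ / (α - 1) * Fbar t + (t ^ 2 + γ * t) / (α - 1) * f t := by
    field_simp
    linarith
  rw [hM, hr t]
  field_simp
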